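/- (Theorem 2) For each τ ≥ 0 let E_τ(ρ) = Σᵢ Kᵢ(τ) ρ Kᵢ(τ)† be a trace-preserving qubit channel (Σᵢ Kᵢ(τ)†Kᵢ(τ) = 𝟙) whose Mueller data are t(τ) ∈ ℝ³ and the diagonal matrix Λ(τ) = diag(λ₁(τ), λ₂(τ), λ₃(τ)). Assume the dynamics is Markovian in the sense that for every pair of qubit density matrices ρ, ρ′ the map τ ↦ (sum of the absolute values of the eigenvalues of E_τ(ρ) − E_τ(ρ′)) is nonincreasing. Then for every unit vector m̂ ∈ ℝ³ the sharpness of the POVM obtained by applying the conjugate channel to the projectors Π± = (1/2)(𝟙 ± m̂·σ), namely τ ↦ √(m̂₁²λ₁(τ)² + m̂₂²λ₂(τ)² + m̂₃²λ₃(τ)²), is a nonincreasing function of τ. -/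

import Mathlib

open Matrix

/-- Pauli matrix σ₁. -/
noncomputable def σ1 : Matrix (Fin 2) (Fin 2) ℂ := !![0, 1; 1, 0]
/-- Pauli matrix σ₂. -/
noncomputable def σ2 : Matrix (Fin 2) (Fin 2) ℂ := !![0, -Complex.I; Complex.I, 0]
/-- Pauli matrix σ₃. -/
noncomputable def σ3 : Matrix (Fin 2) (Fin 2) ℂ := !![1, 0; 0, -1]

/-- The three Pauli matrices, indexed. -/
noncomputable def pauli : Fin 3 → Matrix (Fin 2) (Fin 2) ℂ
  | 0 => σ1
  | 1 => σ2
  | 2 => σ3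

/-- `v · σ = v₁σ₁ + v₂σ₂ + v₃σ₃` for `v ∈ ℝ³`. -/
noncomputable def dotσ (v : Fin 3 → ℝ) : Matrix (Fin 2) (Fin 2) ℂ :=
  ∑ i, (v i : ℂ) • pauli i

/-- Euclidean norm of `v ∈ ℝ³`. -/
noncomputable def enorm3 (v : Fin 3 → ℝ) : ℝ := Real.sqrt (v 0 ^ 2 + v 1 ^ 2 + v 2 ^ 2)

set_option maxHeartbeats 1000000

section Aux

open ComplexOrder

lemma trace_eq_sum_eig {n : Type*} [Fintype n] [DecidableEq n] {B : Matrix n n ℂ}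
    (hB : B.IsHermitian) : B.trace = ∑ i, (hB.eigenvalues i : ℂ) := by
  conv_lhs => rw [hB.spectral_theorem, Unitary.conjStarAlgAut_apply]
  rw [Matrix.trace_mul_comm, ← mul_assoc,
    (Matrix.mem_unitaryGroup_iff').mp (hB.eigenvectorUnitary).2, one_mul, Matrix.trace_diagonal]
  rfl

lemma trace_sq_eq_sum_eig {n : Type*} [Fintype n] [DecidableEq n] {B : Matrix n n ℂ}
    (hB : B.IsHermitian) : (B * B).trace = ∑ i, ((hB.eigenvalues i : ℂ))^2 := by
  conv_lhs => rw [hB.spectral_theorem, Unitary.conjStarAlgAut_apply]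
  rw [show ∀ U D : Matrix n n ℂ, (U*D*star U) * (U*D*star U) = U*(D*((star U * U)*D))*star U by
    intros; simp only [mul_assoc]]
  rw [(Matrix.mem_unitaryGroup_iff').mp (hB.eigenvectorUnitary).2, one_mul,
    Matrix.trace_mul_comm, ← mul_assoc,
    (Matrix.mem_unitaryGroup_iff').mp (hB.eigenvectorUnitary).2, one_mul,
    Matrix.diagonal_mul_diagonal, Matrix.trace_diagonal]
  simp [pow_two]

lemma dotσ_eq (v : Fin 3 → ℝ) :
    dotσ v = !![(v 2 : ℂ), v 0 - Complex.I * v 1; (v 0 : ℂ) + Complex.I * v 1, -(v 2 : ℂ)] := by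
  simp [dotσ, pauli, σ1, σ2, σ3, Fin.sum_univ_three]
  constructor <;> ring

lemma dotσ_herm (v : Fin 3 → ℝ) : (dotσ v).IsHermitian := by
  rw [dotσ_eq]
  ext i j
  fin_cases i <;> fin_cases j <;>
    simp [Matrix.conjTranspose_apply, Complex.ext_iff]

lemma dotσ_trace (v : Fin 3 → ℝ) : (dotσ v).trace = 0 := by
  rw [dotσ_eq]; simp [Matrix.trace_fin_two]

lemma dotσ_sq (v : Fin 3 → ℝ) (hv : v 0 ^2 + v 1 ^2 + v 2^2 = 1) :
    dotσ v * dotσ v = 1 := by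
  have : ((v 0 : ℂ))^2 + (v 1 : ℂ)^2 + (v 2 : ℂ)^2 = 1 := by
    exact_mod_cast congrArg (Complex.ofReal) hv
  rw [dotσ_eq]
  ext i j
  fin_cases i <;> fin_cases j <;>
    simp [Matrix.mul_apply, Fin.sum_univ_two, Matrix.one_apply] <;>
    (first | ring1 | linear_combination this - (v 1:ℂ)^2 * Complex.I_sq)

/-- The density matrix `(1/2)(𝟙 + v·σ)`. -/
noncomputable def ρv (v : Fin 3 → ℝ) : Matrix (Fin 2) (Fin 2) ℂ := (1/2 : ℂ) • (1 + dotσ v)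

lemma ρv_herm (v : Fin 3 → ℝ) : (ρv v).IsHermitian := by
  unfold ρv Matrix.IsHermitian
  rw [conjTranspose_smul, conjTranspose_add, conjTranspose_one, (dotσ_herm v)]
  norm_num

lemma ρv_trace (v : Fin 3 → ℝ) : (ρv v).trace = 1 := by
  unfold ρv
  rw [trace_smul, trace_add, dotσ_trace]
  simp [Matrix.trace_one]

lemma ρv_psd (v : Fin 3 → ℝ) (hv : v 0 ^2 + v 1 ^2 + v 2^2 = 1) : (ρv v).PosSemidef := by
  have hsq : ρv v * ρv v = ρv v := by
    unfold ρv
    rw [smul_mul_smul_comm, add_mul, mul_add, mul_add, one_mul, one_mul, mul_one, dotσ_sq v hv]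
    ext i j
    simp only [Matrix.smul_apply, Matrix.add_apply, Matrix.one_apply, smul_eq_mul]
    split <;> ring
  have : ρv v = (ρv v)ᴴ * (ρv v) := by rw [ρv_herm v, hsq]
  rw [this]
  exact Matrix.posSemidef_conjTranspose_mul_self _

lemma ρv_sub (v : Fin 3 → ℝ) : ρv v - ρv (-v) = dotσ v := by
  have h : dotσ (-v) = -dotσ v := by
    unfold dotσ
    rw [← Finset.sum_neg_distrib]
    congr 1; ext i; push_cast [Pi.neg_apply]; rw [neg_smul]
  unfold ρv
  rw [h, ← smul_sub]
  ext i j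
  simp only [Matrix.smul_apply, Matrix.sub_apply, Matrix.add_apply, Matrix.neg_apply, smul_eq_mul]
  ring

lemma tracesq {A : Matrix (Fin 2) (Fin 2) ℂ} (hA : A.IsHermitian) (htr : A.trace = 0)
    (x y z : ℝ)
    (h1 : ((σ1 * A).trace).re = 2*x) (h2 : ((σ2 * A).trace).re = 2*y)
    (h3 : ((σ3 * A).trace).re = 2*z) :
    (A*A).trace = 2*(x^2+y^2+z^2) := by
  have h10 : A 1 0 = starRingEnd ℂ (A 0 1) := by
    have := congrFun (congrFun hA 1) 0
    simpa [Matrix.conjTranspose_apply] using this.symm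
  have h00 : starRingEnd ℂ (A 0 0) = A 0 0 := by
    have := congrFun (congrFun hA 0) 0
    simpa [Matrix.conjTranspose_apply] using this
  have h00im : (A 0 0).im = 0 := by
    have := congrArg Complex.im h00
    simp at this; linarith
  rw [Matrix.trace_fin_two] at htr
  have h11 : A 1 1 = - A 0 0 := by linear_combination htr
  have e1 : (σ1 * A).trace = A 1 0 + A 0 1 := by
    simp [σ1, Matrix.trace_fin_two, Matrix.mul_apply, Fin.sum_univ_two, Matrix.vecMul,
      dotProduct]
  have e2 : (σ2 * A).trace = -Complex.I * A 1 0 + Complex.I * A 0 1 := by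
    simp [σ2, Matrix.trace_fin_two, Matrix.mul_apply, Fin.sum_univ_two, Matrix.vecMul,
      dotProduct]
  have e3 : (σ3 * A).trace = A 0 0 - A 1 1 := by
    simp [σ3, Matrix.trace_fin_two, Matrix.mul_apply, Fin.sum_univ_two, Matrix.vecMul,
      dotProduct]; ring
  have e4 : (A * A).trace = A 0 0 * A 0 0 + A 0 1 * A 1 0 + A 1 0 * A 0 1 + A 1 1 * A 1 1 := by
    simp [Matrix.trace_fin_two, Matrix.mul_apply, Fin.sum_univ_two]; ring
  rw [e1, h10] at h1
  rw [e2, h10] at h2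
  rw [e3, h11] at h3
  rw [e4, h10, h11]
  simp only [Complex.add_re, Complex.mul_re, Complex.mul_im, Complex.conj_re, Complex.conj_im,
    Complex.neg_re, Complex.neg_im, Complex.sub_re, Complex.I_re, Complex.I_im, h00im] at h1 h2 h3
  have hp : (A 0 1).re = x := by linarith
  have hq : (A 0 1).im = -y := by linarith
  have hr : (A 0 0).re = z := by linarith
  apply Complex.ext <;>
  · simp only [Complex.add_re, Complex.add_im, Complex.mul_re, Complex.mul_im, Complex.conj_re,
      Complex.conj_im, Complex.neg_re, Complex.neg_im, h00im, Complex.ofReal_re, Complex.ofReal_im,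
      ← Complex.ofReal_pow, Complex.re_ofNat, Complex.im_ofNat]
    rw [hp, hq, hr]; ring

lemma sum_abs_eig {B : Matrix (Fin 2) (Fin 2) ℂ} (hB : B.IsHermitian) (S : ℝ)
    (htr : B.trace = 0) (hsq : (B*B).trace = 2*S) :
    ∑ j, |hB.eigenvalues j| = 2 * Real.sqrt S := by
  have h1 : hB.eigenvalues 0 + hB.eigenvalues 1 = 0 := by
    have := (trace_eq_sum_eig hB).symm.trans htr
    rw [Fin.sum_univ_two] at this
    exact_mod_cast this
  have h2 : hB.eigenvalues 0 ^ 2 + hB.eigenvalues 1 ^ 2 = 2 * S := by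
    have := (trace_sq_eq_sum_eig hB).symm.trans hsq
    rw [Fin.sum_univ_two] at this
    exact_mod_cast this
  have he : hB.eigenvalues 1 = - hB.eigenvalues 0 := by linarith
  have hS : hB.eigenvalues 0 ^ 2 = S := by rw [he] at h2; nlinarith
  rw [Fin.sum_univ_two, he, abs_neg, ← hS, Real.sqrt_sq_eq_abs]
  ring

end Aux

open ComplexOrder in
/-- Theorem 2: under Markovian qubit dynamics (trace-distance monotonicity) with diagonal
Mueller matrices `Λ(τ) = diag(λ₁(τ), λ₂(τ), λ₃(τ))`, the sharpness
`√(m̂₁²λ₁(τ)² + m̂₂²λ₂(τ)² + m̂₃²λ₃(τ)²)` of the POVM induced on any projective measurement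
by the conjugate channel is nonincreasing in `τ`. -/
theorem stmt7 {N : ℕ} (K : ℝ → Fin N → Matrix (Fin 2) (Fin 2) ℂ)
    (hTP : ∀ τ, 0 ≤ τ → ∑ i, (K τ i)ᴴ * K τ i = 1)
    (t : ℝ → Fin 3 → ℝ)
    (ht : ∀ τ, 0 ≤ τ → ∀ j, t τ j
        = (1/2) * ((pauli j * ∑ i, K τ i * 1 * (K τ i)ᴴ).trace).re)
    (lam : Fin 3 → ℝ → ℝ)
    (hlam : ∀ τ, 0 ≤ τ → ∀ j k : Fin 3,
        (1/2) * ((pauli j * ∑ i, K τ i * pauli k * (K τ i)ᴴ).trace).re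
          = if j = k then lam j τ else 0)
    (hMarkov : ∀ ρ ρ' : Matrix (Fin 2) (Fin 2) ℂ,
        ρ.PosSemidef → ρ.trace = 1 → ρ'.PosSemidef → ρ'.trace = 1 →
        ∀ τ₁ τ₂, 0 ≤ τ₁ → τ₁ ≤ τ₂ →
        ∀ (h₁ : ((∑ i, K τ₁ i * ρ * (K τ₁ i)ᴴ)
              - ∑ i, K τ₁ i * ρ' * (K τ₁ i)ᴴ).IsHermitian)
          (h₂ : ((∑ i, K τ₂ i * ρ * (K τ₂ i)ᴴ)
              - ∑ i, K τ₂ i * ρ' * (K τ₂ i)ᴴ).IsHermitian),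
          ∑ j, |h₂.eigenvalues j| ≤ ∑ j, |h₁.eigenvalues j|)
    (mh : Fin 3 → ℝ) (hm : enorm3 mh = 1) :
    ∀ τ₁ τ₂, 0 ≤ τ₁ → τ₁ ≤ τ₂ →
      Real.sqrt (mh 0 ^ 2 * lam 0 τ₂ ^ 2 + mh 1 ^ 2 * lam 1 τ₂ ^ 2 + mh 2 ^ 2 * lam 2 τ₂ ^ 2)
        ≤ Real.sqrt
            (mh 0 ^ 2 * lam 0 τ₁ ^ 2 + mh 1 ^ 2 * lam 1 τ₁ ^ 2 + mh 2 ^ 2 * lam 2 τ₁ ^ 2) := by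
  intro τ₁ τ₂ hτ₁ h12
  have hτ₂ : 0 ≤ τ₂ := le_trans hτ₁ h12
  have hvv : mh 0 ^2 + mh 1 ^2 + mh 2 ^2 = 1 := by
    have h0 : (0:ℝ) ≤ mh 0 ^2 + mh 1 ^2 + mh 2 ^2 := by positivity
    have := congrArg (fun r => r^2) hm
    unfold enorm3 at this
    simpa [Real.sq_sqrt h0] using this
  -- the difference of outputs is the channel applied to `mh·σ`
  have hd : ∀ τ, (∑ i, K τ i * ρv mh * (K τ i)ᴴ) - ∑ i, K τ i * ρv (-mh) * (K τ i)ᴴ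
      = ∑ i, K τ i * dotσ mh * (K τ i)ᴴ := by
    intro τ
    rw [← Finset.sum_sub_distrib]
    refine Finset.sum_congr rfl fun i _ => ?_
    rw [← ρv_sub mh, mul_sub, sub_mul]
  -- hermiticity of the channel output of `mh·σ`
  have hherm : ∀ τ, (∑ i, K τ i * dotσ mh * (K τ i)ᴴ).IsHermitian := by
    intro τ
    unfold Matrix.IsHermitian
    rw [conjTranspose_sum]
    refine Finset.sum_congr rfl fun i _ => ?_
    rw [conjTranspose_mul, conjTranspose_mul, conjTranspose_conjTranspose, (dotσ_herm mh),
      mul_assoc]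
  -- key sharpness computation
  have key : ∀ τ, 0 ≤ τ →
      ∀ (h : ((∑ i, K τ i * ρv mh * (K τ i)ᴴ) - ∑ i, K τ i * ρv (-mh) * (K τ i)ᴴ).IsHermitian),
      ∑ j, |h.eigenvalues j|
        = 2 * Real.sqrt (mh 0 ^ 2 * lam 0 τ ^ 2 + mh 1 ^ 2 * lam 1 τ ^ 2
            + mh 2 ^ 2 * lam 2 τ ^ 2) := by
    intro τ hτ h
    have hA := hherm τ
    -- trace of A is zero
    have hAtr : (∑ i, K τ i * dotσ mh * (K τ i)ᴴ).trace = 0 := by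
      rw [Matrix.trace_sum]
      have : ∀ i : Fin N, (K τ i * dotσ mh * (K τ i)ᴴ).trace
          = ((K τ i)ᴴ * K τ i * dotσ mh).trace := by
        intro i
        rw [Matrix.trace_mul_cycle]
      rw [Finset.sum_congr rfl fun i _ => this i, ← Matrix.trace_sum, ← Finset.sum_mul,
        hTP τ hτ, one_mul, dotσ_trace]
    -- linearity: A = ∑ₖ mhₖ • Bₖ
    have hlin : (∑ i, K τ i * dotσ mh * (K τ i)ᴴ)
        = ∑ k, (mh k : ℂ) • ∑ i, K τ i * pauli k * (K τ i)ᴴ := by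
      unfold dotσ
      simp_rw [Finset.mul_sum, Finset.sum_mul, mul_smul_comm, smul_mul_assoc, Finset.smul_sum]
      rw [Finset.sum_comm]
    -- Pauli coefficients of A
    have hTj : ∀ j : Fin 3, ((pauli j * ∑ i, K τ i * dotσ mh * (K τ i)ᴴ).trace).re
        = 2 * (mh j * lam j τ) := by
      intro j
      rw [hlin, Finset.mul_sum]
      simp_rw [mul_smul_comm, Matrix.trace_sum, Matrix.trace_smul]
      rw [Complex.re_sum]
      have : ∀ k : Fin 3,
          (((mh k : ℂ) • (pauli j * ∑ i, K τ i * pauli k * (K τ i)ᴴ).trace)).re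
          = mh k * (2 * (if j = k then lam j τ else 0)) := by
        intro k
        have hk := hlam τ hτ j k
        rw [smul_eq_mul]
        simp only [Complex.mul_re, Complex.ofReal_re, Complex.ofReal_im, zero_mul, sub_zero]
        rw [← hk]; ring
      rw [Finset.sum_congr rfl fun k _ => this k]
      fin_cases j <;> simp [Fin.sum_univ_three] <;> ring
    -- trace of A² 
    have hsq : ((∑ i, K τ i * dotσ mh * (K τ i)ᴴ) * ∑ i, K τ i * dotσ mh * (K τ i)ᴴ).trace
        = 2 * (((mh 0 * lam 0 τ)^2 + (mh 1 * lam 1 τ)^2 + (mh 2 * lam 2 τ)^2 : ℝ) : ℂ) := by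
      have p0 : pauli 0 = σ1 := rfl
      have p1 : pauli 1 = σ2 := rfl
      have p2 : pauli 2 = σ3 := rfl
      have h' := tracesq hA hAtr (mh 0 * lam 0 τ) (mh 1 * lam 1 τ) (mh 2 * lam 2 τ)
        (by rw [← p0]; exact hTj 0) (by rw [← p1]; exact hTj 1) (by rw [← p2]; exact hTj 2)
      rw [h']; push_cast; ring
    have := sum_abs_eig (B := (∑ i, K τ i * ρv mh * (K τ i)ᴴ)
        - ∑ i, K τ i * ρv (-mh) * (K τ i)ᴴ) h
        ((mh 0 * lam 0 τ)^2 + (mh 1 * lam 1 τ)^2 + (mh 2 * lam 2 τ)^2)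
        (by rw [hd τ]; exact hAtr) (by rw [hd τ]; exact hsq)
    rw [this]
    congr 1
    congr 1
    ring
  -- apply Markovianity to ρ = ρv mh, ρ' = ρv (-mh)
  have hneg : (-mh) 0 ^2 + (-mh) 1 ^2 + (-mh) 2 ^2 = 1 := by
    simpa using hvv
  have h₁ : ((∑ i, K τ₁ i * ρv mh * (K τ₁ i)ᴴ)
      - ∑ i, K τ₁ i * ρv (-mh) * (K τ₁ i)ᴴ).IsHermitian := by
    rw [hd τ₁]; exact hherm τ₁
  have h₂ : ((∑ i, K τ₂ i * ρv mh * (K τ₂ i)ᴴ)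
      - ∑ i, K τ₂ i * ρv (-mh) * (K τ₂ i)ᴴ).IsHermitian := by
    rw [hd τ₂]; exact hherm τ₂
  have hM := hMarkov (ρv mh) (ρv (-mh)) (ρv_psd mh hvv) (ρv_trace mh)
    (ρv_psd (-mh) hneg) (ρv_trace (-mh)) τ₁ τ₂ hτ₁ h12 h₁ h₂
  rw [key τ₁ hτ₁ h₁, key τ₂ hτ₂ h₂] at hM
  linarith
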